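/- Let m ≥ 5 and let C be a 2m × (n+1) binary 3-covering array, where binom(m−1, ⌊m/2⌋−1) + m − 3⌊m/2⌋ < n ≤ binom(m−1, ⌊m/2⌋−1). Then every column c^i of C has weight wt(c^i) = m, and for any two distinct columns c^i and c^j of C the Hamming distance satisfies d(c^i, c^j) = 2⌊m/2⌋ or d(c^i, c^j) = 2⌈m/2⌉. -/

import Mathlib

/-- An `m × n` matrix over `B_q = {0,…,q-1}` is a `t`-covering array if for any `t`
distinct column indices and any `q`-ary vector of length `t`, some row realizes it. -/
def IsCoveringArray (m n q t : ℕ) (C : Fin m → Fin n → Fin q) : Prop :=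
  ∀ cols : Fin t → Fin n, Function.Injective cols →
    ∀ v : Fin t → Fin q, ∃ r : Fin m, ∀ j : Fin t, C r (cols j) = v j

/-- `CAN t n q` : the minimal size `m` for which a `CA(m; t, n, q)` exists. -/
noncomputable def CAN (t n q : ℕ) : ℕ :=
  sInf { m | ∃ C : Fin m → Fin n → Fin q, IsCoveringArray m n q t C }

/-- The weight of the `i`-th column: the number of nonzero entries. -/
def colWt {m n q : ℕ} (C : Fin m → Fin n → Fin q) (i : Fin n) : ℕ :=
  (Finset.univ.filter fun r : Fin m => (C r i : ℕ) ≠ 0).card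

/-- The support of the `i`-th column: the set of coordinates where it is nonzero. -/
def colSupp {m n q : ℕ} (C : Fin m → Fin n → Fin q) (i : Fin n) : Finset (Fin m) :=
  Finset.univ.filter fun r : Fin m => (C r i : ℕ) ≠ 0

/-- The Hamming distance between the `i`-th and `j`-th columns. -/
def colDist {m n q : ℕ} (C : Fin m → Fin n → Fin q) (i j : Fin n) : ℕ :=
  (Finset.univ.filter fun r : Fin m => C r i ≠ C r j).card

/-- Two arrays are equivalent if one is obtained from the other by a row permutation,
a column permutation, and value permutations applied columnwise. -/
def CAEquiv {m n q : ℕ} (C C' : Fin m → Fin n → Fin q) : Prop :=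
  ∃ (σ : Equiv.Perm (Fin m)) (τ : Equiv.Perm (Fin n)) (f : Fin n → Equiv.Perm (Fin q)),
    ∀ r i, C' r i = f i (C (σ r) (τ i))

/-- The standard maximal binary 2-covering array of size `m` : an
`m × (m-1).choose (m/2 - 1)` binary matrix whose first row is all ones and whose columns,
restricted to the remaining `m - 1` rows, are exactly (i.e. are pairwise distinct) the binary
vectors of length `m-1` with `m/2 - 1` ones. -/
def IsStandardMaxArray (m : ℕ) (S : Fin m → Fin ((m-1).choose (m/2 - 1)) → Fin 2) : Prop :=
  (∀ (r : Fin m) (i), (r : ℕ) = 0 → S r i = 1) ∧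
  (Function.Injective fun i => fun r => S r i) ∧
  (∀ i, (Finset.univ.filter fun r : Fin m => (r : ℕ) ≠ 0 ∧ S r i = 1).card = m/2 - 1)


open Finset
open scoped FinsetFamily

section AuxLemmas
variable {α : Type*} [DecidableEq α]

lemma fin2_ne_zero {v : Fin 2} (h : v ≠ 0) : v = 1 := by fin_cases v <;> simp_all
lemma fin2_ne_one {v : Fin 2} (h : v ≠ 1) : v = 0 := by fin_cases v <;> simp_all
lemma fin2_cases (v : Fin 2) : v = 0 ∨ v = 1 := by fin_cases v <;> simp


lemma rel_local_lym {s : Finset α} {t : ℕ} (ht : 1 ≤ t) {G : Finset (Finset α)}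
    (hG : ∀ B ∈ G, B ⊆ s ∧ B.card = t) :
    G.card * t ≤ (∂ G).card * (s.card - t + 1) := by
  have key := Finset.card_nsmul_le_card_nsmul (s := G) (t := ∂ G)
      (r := fun B D => D ⊆ B) (m := t) (n := s.card - t + 1) ?_ ?_
  · simpa [smul_eq_mul] using key
  · intro B hB
    rw [Finset.bipartiteAbove]
    calc t = (B.image (fun a => B.erase a)).card := by
              rw [Finset.card_image_of_injOn, (hG B hB).2]
              intro a ha b hb hab
              by_contra hne
              have : a ∈ B.erase b := Finset.mem_erase.2 ⟨hne, ha⟩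
              have hab' : B.erase a = B.erase b := hab
              rw [← hab'] at this
              exact (Finset.notMem_erase a B) this
      _ ≤ _ := by
              apply Finset.card_le_card
              intro D hD
              obtain ⟨a, ha, rfl⟩ := Finset.mem_image.1 hD
              exact Finset.mem_filter.2 ⟨Finset.erase_mem_shadow hB ha, Finset.erase_subset _ _⟩
  · intro D hD
    rw [Finset.bipartiteBelow]
    obtain ⟨B₀, hB₀, hDB₀⟩ := Finset.exists_subset_of_mem_shadow hD
    have hDcard : D.card = t - 1 := by
      have : (G : Set (Finset α)).Sized t := fun B hB => (hG B hB).2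
      exact this.shadow hD
    have hDs : D ⊆ s := hDB₀.trans (hG B₀ hB₀).1
    have hts : t ≤ s.card := (hG B₀ hB₀).2 ▸ Finset.card_le_card (hG B₀ hB₀).1
    calc (G.filter fun B => D ⊆ B).card
        ≤ ((s \ D).powersetCard 1).card := by
          apply Finset.card_le_card_of_injOn (fun B => B \ D)
          · intro B hB
            rw [Finset.mem_coe, Finset.mem_filter] at hB
            obtain ⟨hBG, hDB⟩ := hB
            rw [Finset.mem_coe, Finset.mem_powersetCard]
            constructor
            · intro x hx
              rw [Finset.mem_sdiff] at hx ⊢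
              exact ⟨(hG B hBG).1 hx.1, hx.2⟩
            · rw [Finset.card_sdiff_of_subset hDB, (hG B hBG).2, hDcard]
              omega
          · intro B hB B' hB' hEq
            rw [Finset.mem_coe, Finset.mem_filter] at hB hB'
            have hEq' : B \ D = B' \ D := hEq
            have : B \ D ∪ D = B' \ D ∪ D := by rw [hEq']
            rwa [Finset.sdiff_union_of_subset hB.2, Finset.sdiff_union_of_subset hB'.2] at this
      _ = s.card - t + 1 := by
          rw [Finset.card_powersetCard, Finset.card_sdiff_of_subset hDs, hDcard,
            Nat.choose_one_right]
          omega


lemma insert_erase_erase {B : Finset α} {a x : α} (haB : a ∈ B) (hxB : x ∈ B) (hxa : x ≠ a) :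
    insert a ((B.erase a).erase x) = B.erase x := by
  rw [Finset.erase_right_comm]
  exact Finset.insert_erase (Finset.mem_erase.2 ⟨Ne.symm hxa, haB⟩)

lemma shadow_gain_aux : ∀ N : ℕ, ∀ (s : Finset α) (t : ℕ) (G : Finset (Finset α)),
    s.card ≤ N → G.Nonempty → (∀ B ∈ G, B ⊆ s ∧ B.card = t) → s.card + 2 ≤ 2 * t →
    G.card + (t - 1) ≤ (∂ G).card := by
  intro N
  induction N with
  | zero =>
    intro s t G hsN hne hG hst
    obtain ⟨B₀, hB₀⟩ := hne
    have h1 := (hG B₀ hB₀).2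
    have h2 := Finset.card_le_card (hG B₀ hB₀).1
    omega
  | succ N ih =>
    intro s t G hsN hne hG hst
    obtain ⟨B₀, hB₀⟩ := hne
    have htcard : t ≤ s.card := (hG B₀ hB₀).2 ▸ Finset.card_le_card (hG B₀ hB₀).1
    have ht2 : 2 ≤ t := by omega
    have hspos : 0 < s.card := by omega
    obtain ⟨a, ha⟩ := Finset.card_pos.1 hspos
    have hserase : (s.erase a).card = s.card - 1 := Finset.card_erase_of_mem ha
    set G₀ := G.filter (fun B => a ∉ B) with hG₀def
    set G₁ := G.filter (fun B => a ∈ B) with hG₁def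
    have hsplit : G₁.card + G₀.card = G.card := Finset.card_filter_add_card_filter_not (fun B => a ∈ B)
    set 𝒞 := G₁.image (fun B => B.erase a) with h𝒞def
    -- basic properties of 𝒞
    have h𝒞card : 𝒞.card = G₁.card := by
      rw [h𝒞def]
      apply Finset.card_image_of_injOn
      intro B hB B' hB' hEq
      have hB1 : a ∈ B := (Finset.mem_filter.1 hB).2
      have hB1' : a ∈ B' := (Finset.mem_filter.1 hB').2
      have hEq' : B.erase a = B'.erase a := hEq
      rw [← Finset.insert_erase hB1, ← Finset.insert_erase hB1', hEq']
    have h𝒞props : ∀ C ∈ 𝒞, C ⊆ s.erase a ∧ C.card = t - 1 := by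
      intro C hC
      obtain ⟨B, hB, rfl⟩ := Finset.mem_image.1 hC
      rw [hG₁def, Finset.mem_filter] at hB
      constructor
      · intro x hx
        rw [Finset.mem_erase] at hx ⊢
        exact ⟨hx.1, (hG B hB.1).1 hx.2⟩
      · rw [Finset.card_erase_of_mem hB.2, (hG B hB.1).2]
    -- 𝒞 ⊆ ∂ G
    have h𝒞sub : 𝒞 ⊆ ∂ G := by
      intro C hC
      obtain ⟨B, hB, rfl⟩ := Finset.mem_image.1 hC
      rw [hG₁def, Finset.mem_filter] at hB
      exact Finset.erase_mem_shadow hB.1 hB.2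
    -- (∂ 𝒞).image (insert a) ⊆ ∂ G, and its members contain a
    have himg : ∀ D ∈ ∂ 𝒞, insert a D ∈ ∂ G := by
      intro D hD
      rw [Finset.mem_shadow_iff] at hD
      obtain ⟨C, hC, x, hxC, rfl⟩ := hD
      obtain ⟨B, hB, rfl⟩ := Finset.mem_image.1 hC
      rw [hG₁def, Finset.mem_filter] at hB
      have hxB : x ∈ B := Finset.mem_of_mem_erase hxC
      have hxa : x ≠ a := Finset.ne_of_mem_erase hxC
      rw [insert_erase_erase hB.2 hxB hxa]
      exact Finset.erase_mem_shadow hB.1 hxB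
    have himgcard : ((∂ 𝒞).image (insert a)).card = (∂ 𝒞).card := by
      apply Finset.card_image_of_injOn
      intro D hD D' hD' hEq
      have haD : a ∉ D := by
        intro hcon
        obtain ⟨C, hC, x, hxC, hDC⟩ := Finset.mem_shadow_iff.1 hD
        have : a ∈ (s.erase a) := by
          subst hDC
          exact (h𝒞props C hC).1 (Finset.mem_of_mem_erase hcon)
        exact (Finset.notMem_erase a s) this
      have haD' : a ∉ D' := by
        intro hcon
        obtain ⟨C, hC, x, hxC, hDC⟩ := Finset.mem_shadow_iff.1 hD'
        have : a ∈ (s.erase a) := by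
          subst hDC
          exact (h𝒞props C hC).1 (Finset.mem_of_mem_erase hcon)
        exact (Finset.notMem_erase a s) this
      have hEq' : insert a D = insert a D' := hEq
      rw [← Finset.erase_insert haD, ← Finset.erase_insert haD', hEq']
    -- members of ∂ 𝒞 don't contain a (needed for disjointness)
    have hshca : ∀ D ∈ ∂ 𝒞, a ∉ D := by
      intro D hD hcon
      obtain ⟨C, hC, x, hxC, hDC⟩ := Finset.mem_shadow_iff.1 hD
      have : a ∈ (s.erase a) := by
        subst hDC
        exact (h𝒞props C hC).1 (Finset.mem_of_mem_erase hcon)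
      exact (Finset.notMem_erase a s) this
    by_cases hG₁e : G₁ = ∅
    · -- all sets avoid a : use induction hypothesis on s.erase a
      have hGG₀ : G = G₀ := by
        rw [hG₀def]
        ext B
        simp only [Finset.mem_filter]
        refine ⟨fun hB => ⟨hB, fun hcon => ?_⟩, fun hB => hB.1⟩
        have : B ∈ G₁ := Finset.mem_filter.2 ⟨hB, hcon⟩
        simp [hG₁e] at this
      apply ih (s.erase a) t G (by omega) ⟨B₀, hB₀⟩ _ (by omega)
      intro B hB
      refine ⟨fun x hx => Finset.mem_erase.2 ⟨?_, (hG B hB).1 hx⟩, (hG B hB).2⟩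
      intro hcon
      have hBG₀ : B ∈ G₀ := hGG₀ ▸ hB
      rw [hG₀def, Finset.mem_filter] at hBG₀
      exact hBG₀.2 (hcon ▸ hx)
    · have h𝒞ne : 𝒞.Nonempty := by
        rw [h𝒞def]
        exact (Finset.nonempty_of_ne_empty hG₁e).image _
      -- ∂ 𝒞 has at least t - 1 elements
      have hshcge : t - 1 ≤ (∂ 𝒞).card := by
        obtain ⟨C₀, hC₀⟩ := h𝒞ne
        have hC₀card : C₀.card = t - 1 := (h𝒞props C₀ hC₀).2
        calc t - 1 = (C₀.image (fun x => C₀.erase x)).card := by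
              rw [Finset.card_image_of_injOn, hC₀card]
              intro x hx y hy hEq
              by_contra hne2
              have : x ∈ C₀.erase y := Finset.mem_erase.2 ⟨hne2, hx⟩
              have hEq' : C₀.erase x = C₀.erase y := hEq
              rw [← hEq'] at this
              exact (Finset.notMem_erase x C₀) this
          _ ≤ (∂ 𝒞).card := by
              apply Finset.card_le_card
              intro D hD
              obtain ⟨x, hx, rfl⟩ := Finset.mem_image.1 hD
              exact Finset.erase_mem_shadow hC₀ hx
      by_cases hG₀e : G₀ = ∅
      · -- all sets contain a : direct argument
        have hG₁G : G₁ = G := by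
          rw [hG₁def]
          ext B
          simp only [Finset.mem_filter]
          refine ⟨fun hB => hB.1, fun hB => ⟨hB, ?_⟩⟩
          by_contra hcon
          have : B ∈ G₀ := Finset.mem_filter.2 ⟨hB, hcon⟩
          simp [hG₀e] at this
        have hunion : 𝒞 ∪ (∂ 𝒞).image (insert a) ⊆ ∂ G := by
          intro X hX
          rcases Finset.mem_union.1 hX with hX | hX
          · exact h𝒞sub hX
          · obtain ⟨D, hD, rfl⟩ := Finset.mem_image.1 hX
            exact himg D hD
        have hdisj : Disjoint 𝒞 ((∂ 𝒞).image (insert a)) := by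
          rw [Finset.disjoint_left]
          intro X hX hX'
          obtain ⟨D, hD, rfl⟩ := Finset.mem_image.1 hX'
          obtain ⟨B, hB, hBX⟩ := Finset.mem_image.1 hX
          have : a ∉ insert a D := by
            rw [← hBX]
            exact Finset.notMem_erase a B
          exact this (Finset.mem_insert_self a D)
        calc G.card + (t - 1) = 𝒞.card + (t - 1) := by rw [h𝒞card, hG₁G]
          _ ≤ 𝒞.card + (∂ 𝒞).card := by omega
          _ = (𝒞 ∪ (∂ 𝒞).image (insert a)).card := by
              rw [Finset.card_union_of_disjoint hdisj, himgcard]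
          _ ≤ (∂ G).card := Finset.card_le_card hunion
      · -- mixed case
        have hG₀ne : G₀.Nonempty := Finset.nonempty_of_ne_empty hG₀e
        have hG₀props : ∀ B ∈ G₀, B ⊆ s.erase a ∧ B.card = t := by
          intro B hB
          rw [hG₀def, Finset.mem_filter] at hB
          exact ⟨fun x hx => Finset.mem_erase.2
            ⟨fun hcon => hB.2 (hcon ▸ hx), (hG B hB.1).1 hx⟩, (hG B hB.1).2⟩
        have hIH : G₀.card + (t - 1) ≤ (∂ G₀).card :=
          ih (s.erase a) t G₀ (by omega) hG₀ne hG₀props (by omega)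
        -- local LYM for 𝒞 on ground s.erase a
        have hLYM : 𝒞.card ≤ (∂ 𝒞).card := by
          have key := rel_local_lym (s := s.erase a) (t := t - 1) (by omega)
            (G := 𝒞) h𝒞props
          have hineq : (s.erase a).card - (t-1) + 1 ≤ t - 1 := by
            rw [hserase]; omega
          have := key.trans (Nat.mul_le_mul_left _ hineq)
          exact Nat.le_of_mul_le_mul_right this (by omega)
        -- ∂ G₀ and image are disjoint subsets of ∂ G
        have hshG0a : ∀ D ∈ ∂ G₀, a ∉ D := by
          intro D hD hcon
          obtain ⟨B, hB, x, hxB, hDB⟩ := Finset.mem_shadow_iff.1 hD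
          rw [hG₀def, Finset.mem_filter] at hB
          exact hB.2 (Finset.mem_of_mem_erase (hDB ▸ hcon))
        have hdisj : Disjoint (∂ G₀) ((∂ 𝒞).image (insert a)) := by
          rw [Finset.disjoint_left]
          intro X hX hX'
          obtain ⟨D, hD, rfl⟩ := Finset.mem_image.1 hX'
          exact hshG0a _ hX (Finset.mem_insert_self a D)
        have hunion : ∂ G₀ ∪ (∂ 𝒞).image (insert a) ⊆ ∂ G := by
          intro X hX
          rcases Finset.mem_union.1 hX with hX | hX
          · exact Finset.shadow_monotone (Finset.filter_subset _ _) hX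
          · obtain ⟨D, hD, rfl⟩ := Finset.mem_image.1 hX
            exact himg D hD
        calc G.card + (t - 1) = (G₀.card + (t-1)) + G₁.card := by omega
          _ ≤ (∂ G₀).card + (∂ 𝒞).card := by
              have : G₁.card ≤ (∂ 𝒞).card := h𝒞card ▸ hLYM
              omega
          _ = (∂ G₀ ∪ (∂ 𝒞).image (insert a)).card := by
              rw [Finset.card_union_of_disjoint hdisj, himgcard]
          _ ≤ (∂ G).card := Finset.card_le_card hunion


variable [Fintype α]

lemma compls_props {r : ℕ} {G : Finset (Finset α)} (hG : ∀ B ∈ G, B.card = r)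
    (hr : r ≤ Fintype.card α) :
    ∀ B ∈ Gᶜˢ, B ⊆ (Finset.univ : Finset α) ∧ B.card = Fintype.card α - r := by
  intro B hB
  rw [Finset.mem_compls] at hB
  refine ⟨Finset.subset_univ _, ?_⟩
  have : B = Bᶜᶜ := (compl_compl B).symm
  rw [this, Finset.card_compl, hG _ hB]

lemma up_lym_ge {r : ℕ} {G : Finset (Finset α)} (hG : ∀ B ∈ G, B.card = r)
    (hr : 2 * (r + 1) ≤ Fintype.card α + 1) :
    G.card ≤ (∂⁺ G).card := by
  rcases G.eq_empty_or_nonempty with rfl | ⟨B₀, hB₀⟩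
  · simp
  have hrcard : r ≤ Fintype.card α := le_trans (by omega) le_rfl
  have hrlt : r < Fintype.card α := by omega
  have key := rel_local_lym (s := (Finset.univ : Finset α)) (t := Fintype.card α - r)
    (by omega) (G := Gᶜˢ) (compls_props hG hrcard)
  rw [Finset.shadow_compls, Finset.card_compls, Finset.card_compls, Finset.card_univ] at key
  have h2 : Fintype.card α - (Fintype.card α - r) + 1 = r + 1 := by omega
  rw [h2] at key
  have h3 : (∂⁺ G).card * (r+1) ≤ (∂⁺ G).card * (Fintype.card α - r) :=
    Nat.mul_le_mul_left _ (by omega)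
  have := key.trans h3
  exact Nat.le_of_mul_le_mul_right this (by omega)

lemma up_gain {r : ℕ} {G : Finset (Finset α)} (hne : G.Nonempty) (hG : ∀ B ∈ G, B.card = r)
    (hr : 2 * r + 2 ≤ Fintype.card α) :
    G.card + (Fintype.card α - r - 1) ≤ (∂⁺ G).card := by
  have hrcard : r ≤ Fintype.card α := by omega
  have key := shadow_gain_aux (Finset.univ : Finset α).card (Finset.univ : Finset α)
    (Fintype.card α - r) Gᶜˢ le_rfl ?_ (compls_props hG hrcard) ?_
  · rw [Finset.shadow_compls, Finset.card_compls, Finset.card_compls] at key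
    have : Fintype.card α - r - 1 = Fintype.card α - r - 1 := rfl
    convert key using 2
  · obtain ⟨B, hB⟩ := hne
    exact ⟨Bᶜ, Finset.compl_mem_compls hB⟩
  · rw [Finset.card_univ]; omega

/-- The push-up construction. -/
def pushFam (ℛ : Finset (Finset α)) : ℕ → Finset (Finset α)
  | 0 => ℛ.filter fun B => B.card = 0
  | s+1 => ℛ.filter (fun B => B.card = s+1) ∪ ∂⁺ (pushFam ℛ s)

variable {ℛ : Finset (Finset α)}

lemma filter_subset_pushFam (s : ℕ) : (ℛ.filter fun B => B.card = s) ⊆ pushFam ℛ s := by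
  cases s with
  | zero => exact fun _ h => h
  | succ s => exact Finset.subset_union_left

lemma pushFam_sized : ∀ s : ℕ, ∀ B ∈ pushFam ℛ s, B.card = s := by
  intro s
  induction s with
  | zero => intro B hB; exact (Finset.mem_filter.1 hB).2
  | succ s ih =>
    intro B hB
    rcases Finset.mem_union.1 hB with hB | hB
    · exact (Finset.mem_filter.1 hB).2
    · have hsized : (pushFam ℛ s : Set (Finset α)).Sized s := fun C hC => ih C hC
      exact hsized.upShadow hB

lemma pushFam_exists_sub : ∀ s : ℕ, ∀ B ∈ pushFam ℛ s, ∃ R ∈ ℛ, R ⊆ B := by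
  intro s
  induction s with
  | zero => intro B hB; exact ⟨B, (Finset.mem_filter.1 hB).1, le_rfl⟩
  | succ s ih =>
    intro B hB
    rcases Finset.mem_union.1 hB with hB | hB
    · exact ⟨B, (Finset.mem_filter.1 hB).1, le_rfl⟩
    · obtain ⟨B', hB', hB'B⟩ := Finset.exists_subset_of_mem_upShadow hB
      obtain ⟨R, hR, hRB'⟩ := ih B' hB'
      exact ⟨R, hR, hRB'.trans hB'B⟩

lemma pushFam_disjoint (hanti : ∀ B ∈ ℛ, ∀ B' ∈ ℛ, B ⊆ B' → B = B') (s : ℕ) :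
    Disjoint (ℛ.filter fun B => B.card = s+1) (∂⁺ (pushFam ℛ s)) := by
  rw [Finset.disjoint_left]
  intro B hB hB'
  obtain ⟨B'', hB'', hB''B⟩ := Finset.exists_subset_of_mem_upShadow hB'
  obtain ⟨R, hR, hRB''⟩ := pushFam_exists_sub s B'' hB''
  rw [Finset.mem_filter] at hB
  have := hanti R hR B hB.1 (hRB''.trans hB''B)
  have h1 : R.card ≤ B''.card := Finset.card_le_card hRB''
  rw [pushFam_sized s B'' hB''] at h1
  rw [this] at h1
  omega

lemma pushFam_filter_le_card {k : ℕ} (hanti : ∀ B ∈ ℛ, ∀ B' ∈ ℛ, B ⊆ B' → B = B')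
    (hp : 2 * k ≤ Fintype.card α) :
    ∀ s : ℕ, s ≤ k → (ℛ.filter fun B => B.card ≤ s).card ≤ (pushFam ℛ s).card := by
  intro s
  induction s with
  | zero =>
    intro _
    apply Finset.card_le_card
    intro B hB
    rw [Finset.mem_filter] at hB
    exact Finset.mem_filter.2 ⟨hB.1, by omega⟩
  | succ s ih =>
    intro hsk
    have hsplit : (ℛ.filter fun B => B.card ≤ s+1)
        = (ℛ.filter fun B => B.card = s+1) ∪ (ℛ.filter fun B => B.card ≤ s) := by
      ext B
      simp only [Finset.mem_filter, Finset.mem_union]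
      constructor
      · rintro ⟨h1, h2⟩
        rcases Nat.lt_or_ge B.card (s+1) with h | h
        · exact Or.inr ⟨h1, by omega⟩
        · exact Or.inl ⟨h1, by omega⟩
      · rintro (⟨h1, h2⟩ | ⟨h1, h2⟩) <;> exact ⟨h1, by omega⟩
    have hdisj2 : Disjoint (ℛ.filter fun B => B.card = s+1) (ℛ.filter fun B => B.card ≤ s) := by
      rw [Finset.disjoint_left]
      intro B hB hB'
      rw [Finset.mem_filter] at hB hB'
      omega
    rw [hsplit, Finset.card_union_of_disjoint hdisj2]
    have hpush : (pushFam ℛ (s+1)).card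
        = (ℛ.filter fun B => B.card = s+1).card + (∂⁺ (pushFam ℛ s)).card := by
      have heq : pushFam ℛ (s+1) = (ℛ.filter fun B => B.card = s+1) ∪ ∂⁺ (pushFam ℛ s) := rfl
      rw [heq, Finset.card_union_of_disjoint (pushFam_disjoint hanti s)]
    rw [hpush]
    have hup : (pushFam ℛ s).card ≤ (∂⁺ (pushFam ℛ s)).card := by
      apply up_lym_ge (r := s) (pushFam_sized s)
      omega
    have := ih (by omega)
    omega

lemma pushFam_nonempty {A : Finset α} (hA : A ∈ ℛ) :
    ∀ s : ℕ, A.card ≤ s → s ≤ Fintype.card α → (pushFam ℛ s).Nonempty := by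
  intro s
  induction s with
  | zero =>
    intro h1 _
    exact ⟨A, filter_subset_pushFam 0 (Finset.mem_filter.2 ⟨hA, by omega⟩)⟩
  | succ s ih =>
    intro h1 h2
    rcases Nat.lt_or_ge s A.card with h | h
    · have : A.card = s + 1 := by omega
      exact ⟨A, filter_subset_pushFam (s+1) (Finset.mem_filter.2 ⟨hA, this⟩)⟩
    · obtain ⟨B, hB⟩ := ih h (by omega)
      have hBcard : B.card = s := pushFam_sized s B hB
      have hcompl : (Bᶜ : Finset α).Nonempty := by
        rw [← Finset.card_pos, Finset.card_compl, hBcard]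
        omega
      obtain ⟨a, ha⟩ := hcompl
      rw [Finset.mem_compl] at ha
      exact ⟨insert a B, Finset.mem_union.2 (Or.inr (Finset.insert_mem_upShadow hB ha))⟩


lemma push_final {k : ℕ} (hk : 1 ≤ k) (hp1 : 2 * k ≤ Fintype.card α)
    (hanti : ∀ B ∈ ℛ, ∀ B' ∈ ℛ, B ⊆ B' → B = B')
    (hsz : ∀ B ∈ ℛ, B.card ≤ k)
    (hbad : ∃ A ∈ ℛ, A.card < k) :
    ℛ.card + (Fintype.card α - k) ≤ (pushFam ℛ k).card := by
  obtain ⟨k', rfl⟩ : ∃ k', k = k' + 1 := ⟨k - 1, by omega⟩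
  obtain ⟨A, hA, hAcard⟩ := hbad
  have hne : (pushFam ℛ k').Nonempty :=
    pushFam_nonempty hA k' (by omega) (by omega)
  have hgain : (pushFam ℛ k').card + (Fintype.card α - k' - 1) ≤ (∂⁺ (pushFam ℛ k')).card :=
    up_gain hne (pushFam_sized k') (by omega)
  have hcum : (ℛ.filter fun B => B.card ≤ k').card ≤ (pushFam ℛ k').card :=
    pushFam_filter_le_card (k := k'+1) hanti (by omega) k' (by omega)
  have heq : pushFam ℛ (k'+1) = (ℛ.filter fun B => B.card = k'+1) ∪ ∂⁺ (pushFam ℛ k') := rfl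
  have hcard : (pushFam ℛ (k'+1)).card
      = (ℛ.filter fun B => B.card = k'+1).card + (∂⁺ (pushFam ℛ k')).card := by
    rw [heq, Finset.card_union_of_disjoint (pushFam_disjoint hanti k')]
  have hsplitR : ℛ.card = (ℛ.filter fun B => B.card = k'+1).card
      + (ℛ.filter fun B => B.card ≤ k').card := by
    have h1 : ℛ = (ℛ.filter fun B => B.card = k'+1) ∪ (ℛ.filter fun B => B.card ≤ k') := by
      ext B
      simp only [Finset.mem_filter, Finset.mem_union]
      constructor
      · intro hB
        have := hsz B hB
        rcases Nat.lt_or_ge B.card (k'+1) with h | h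
        · exact Or.inr ⟨hB, by omega⟩
        · exact Or.inl ⟨hB, by omega⟩
      · rintro (⟨h1, _⟩ | ⟨h1, _⟩) <;> exact h1
    have h2 : Disjoint (ℛ.filter fun B => B.card = k'+1) (ℛ.filter fun B => B.card ≤ k') := by
      rw [Finset.disjoint_left]
      intro B hB hB'
      rw [Finset.mem_filter] at hB hB'
      omega
    conv_lhs => rw [h1]
    rw [Finset.card_union_of_disjoint h2]
  omega

lemma intersecting_sized_card_le {k : ℕ} (hk : 1 ≤ k) (hp1 : 2 * k ≤ Fintype.card α)
    {𝒢 : Finset (Finset α)} (hsized : ∀ B ∈ 𝒢, B.card = k)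
    (hint : ∀ B ∈ 𝒢, ∀ B' ∈ 𝒢, (B ∩ B').Nonempty) :
    𝒢.card ≤ (Fintype.card α - 1).choose (k - 1) := by
  classical
  set p := Fintype.card α with hp
  let e := Fintype.equivFin α
  set 𝒢' : Finset (Finset (Fin p)) := 𝒢.image (fun B => B.image e) with h𝒢'
  have hinj : Function.Injective (fun B : Finset α => B.image e) := by
    intro B B' hBB'
    have := Finset.image_injective e.injective
    exact this hBB'
  have hcard' : 𝒢'.card = 𝒢.card := Finset.card_image_of_injective _ hinj
  have hsized' : (𝒢' : Set (Finset (Fin p))).Sized k := by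
    intro B hB
    rw [h𝒢'] at hB
    norm_cast at hB
    obtain ⟨B₀, hB₀, rfl⟩ := Finset.mem_image.1 hB
    rw [Finset.card_image_of_injective _ e.injective]
    exact hsized B₀ hB₀
  have hint' : (𝒢' : Set (Finset (Fin p))).Intersecting := by
    intro B hB B' hB' hdisj
    norm_cast at hB hB'
    rw [h𝒢'] at hB hB'
    obtain ⟨B₀, hB₀, rfl⟩ := Finset.mem_image.1 hB
    obtain ⟨B₀', hB₀', rfl⟩ := Finset.mem_image.1 hB'
    obtain ⟨x, hx⟩ := hint B₀ hB₀ B₀' hB₀'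
    rw [Finset.mem_inter] at hx
    have : e x ∈ (B₀.image e) ∩ (B₀'.image e) := by
      rw [Finset.mem_inter]
      exact ⟨Finset.mem_image_of_mem _ hx.1, Finset.mem_image_of_mem _ hx.2⟩
    exact Finset.disjoint_left.1 hdisj (Finset.mem_inter.1 this).1 (Finset.mem_inter.1 this).2
  have := Finset.erdos_ko_rado hint' hsized' (by omega)
  omega

/-- Main abstract stability lemma for intersecting antichains with a small member. -/
lemma stability_lemma {k : ℕ} (hk : 1 ≤ k) (hp1 : 2 * k ≤ Fintype.card α)
    (hanti : ∀ B ∈ ℛ, ∀ B' ∈ ℛ, B ⊆ B' → B = B')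
    (hint : ∀ B ∈ ℛ, ∀ B' ∈ ℛ, (B ∩ B').Nonempty)
    (hsz : ∀ B ∈ ℛ, B.card ≤ k)
    (hbad : ∃ A ∈ ℛ, A.card < k) :
    ℛ.card + (Fintype.card α - k) ≤ (Fintype.card α - 1).choose (k - 1) := by
  have h1 := push_final hk hp1 hanti hsz hbad
  have h2 : (pushFam ℛ k).card ≤ (Fintype.card α - 1).choose (k - 1) := by
    apply intersecting_sized_card_le hk hp1 (pushFam_sized k)
    intro B hB B' hB'
    obtain ⟨R, hR, hRB⟩ := pushFam_exists_sub k B hB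
    obtain ⟨R', hR', hR'B'⟩ := pushFam_exists_sub k B' hB'
    obtain ⟨x, hx⟩ := hint R hR R' hR'
    rw [Finset.mem_inter] at hx
    exact ⟨x, Finset.mem_inter.2 ⟨hRB hx.1, hR'B' hx.2⟩⟩
  omega


end AuxLemmas





lemma cover3 {M N : ℕ} {C : Fin M → Fin N → Fin 2} (hC : IsCoveringArray M N 2 3 C)
    {i j l : Fin N} (hij : i ≠ j) (hil : i ≠ l) (hjl : j ≠ l) (a b c : Fin 2) :
    ∃ r, C r i = a ∧ C r j = b ∧ C r l = c := by
  have hinj : Function.Injective ![i, j, l] := by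
    intro x y hxy
    fin_cases x <;> fin_cases y <;>
      simp_all [Matrix.cons_val_zero, Matrix.cons_val_one, Matrix.head_cons]
  obtain ⟨r, hr⟩ := hC ![i, j, l] hinj ![a, b, c]
  refine ⟨r, ?_, ?_, ?_⟩
  · have := hr 0; simpa using this
  · have := hr 1; simpa using this
  · have := hr 2; simpa using this

lemma half_pat {m n : ℕ} {C : Fin (2*m) → Fin (n+1) → Fin 2}
    (hC : IsCoveringArray (2*m) (n+1) 2 3 C) (i : Fin (n+1)) (ε : Fin 2)
    (j l : {j : Fin (n+1) // j ≠ i}) (hjl : j ≠ l) (b c : Fin 2) :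
    ∃ r : {r : Fin (2*m) // C r i = ε}, C r.1 j.1 = b ∧ C r.1 l.1 = c := by
  have hij : i ≠ j.1 := Ne.symm j.2
  have hil : i ≠ l.1 := Ne.symm l.2
  have hjl' : j.1 ≠ l.1 := fun h => hjl (Subtype.ext h)
  obtain ⟨r, h1, h2, h3⟩ := cover3 hC hij hil hjl' ε b c
  exact ⟨⟨r, h1⟩, h2, h3⟩




lemma central_mono : Monotone (fun c : ℕ => c.choose (c/2)) := by
  apply monotone_nat_of_le_succ
  intro c
  rcases Nat.even_or_odd c with ⟨a, ha⟩ | ⟨a, ha⟩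
  · have h1 : c/2 = a := by omega
    have h2 : (c+1)/2 = a := by omega
    simp only [h1, h2]
    cases a with
    | zero => simp
    | succ a' =>
      have h3 := Nat.choose_succ_succ c a'
      simp only [Nat.succ_eq_add_one] at h3 ⊢
      omega
  · have h1 : c/2 = a := by omega
    have h2 : (c+1)/2 = a + 1 := by omega
    simp only [h1, h2]
    have h3 := Nat.choose_succ_succ c a
    simp only [Nat.succ_eq_add_one] at h3 ⊢
    omega

lemma le_choose_of {a b : ℕ} (h1 : 1 ≤ b) (h2 : 2*b ≤ a) : a ≤ a.choose b := by
  induction b with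
  | zero => omega
  | succ b ih =>
    rcases Nat.eq_zero_or_pos b with rfl | hb
    · rw [Nat.choose_one_right]
    · have h3 : a ≤ a.choose b := ih (by omega) (by omega)
      have h4 : a.choose b ≤ a.choose (b+1) :=
        Nat.choose_le_succ_of_lt_half_left (by omega)
      omega

lemma odd_arith {f g k : ℕ} (hk2 : 2 ≤ k) (hId : g * k = f * (k+1))
    (hf2k : 2*k ≤ f) (hineq : 2*f + 4 ≤ g + 2*k) : False := by
  obtain ⟨k', rfl⟩ : ∃ k', k = k' + 1 := ⟨k - 1, by omega⟩
  have h1 : (2*f + 4) * (k'+1) ≤ (g + 2*(k'+1)) * (k'+1) :=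
    Nat.mul_le_mul_right _ hineq
  have h2 : (2*(k'+1)) * k' ≤ f * k' := Nat.mul_le_mul_right _ hf2k
  nlinarith [h1, h2, hId]

/-- Part 1: every column has weight `m`. -/
lemma part1 {m n : ℕ} (hm : 5 ≤ m)
    (hn1 : (m-1).choose (m/2 - 1) + m < n + 3 * (m/2))
    {C : Fin (2*m) → Fin (n+1) → Fin 2}
    (hC : IsCoveringArray (2*m) (n+1) 2 3 C)
    (hn2 : 2 ≤ n)
    (i : Fin (n+1)) : (univ.filter fun r => C r i = 1).card = m := by
  classical
  set k := m / 2 with hkdef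
  have hk2 : 2 ≤ k := by omega
  have hkm : 2*k ≤ m ∧ m ≤ 2*k + 1 := by omega
  by_contra hwne
  -- the two halves sum to 2m
  have hsum : (univ.filter fun r : Fin (2*m) => C r i = 1).card
      + (univ.filter fun r : Fin (2*m) => C r i = 0).card = 2*m := by
    have h0 := Finset.card_filter_add_card_filter_not
      (s := (univ : Finset (Fin (2*m)))) (p := fun r => C r i = 1)
    have he : (univ.filter fun r : Fin (2*m) => ¬ C r i = 1)
        = (univ.filter fun r : Fin (2*m) => C r i = 0) := by
      apply Finset.filter_congr
      intro r _
      constructor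
      · exact fun h => fin2_ne_one h
      · intro h hcon; rw [h] at hcon; exact absurd hcon (by decide)
    rw [he] at h0
    simpa using h0
  -- one of the two halves has size ≤ m - 1
  have hhalf : ∃ ε : Fin 2, Fintype.card {r : Fin (2*m) // C r i = ε} ≤ m - 1 := by
    rcases Nat.lt_or_ge (univ.filter fun r : Fin (2*m) => C r i = 1).card m with h | h
    · refine ⟨1, ?_⟩
      rw [Fintype.card_subtype]
      omega
    · refine ⟨0, ?_⟩
      rw [Fintype.card_subtype]
      omega
  obtain ⟨ε, hMle⟩ := hhalf
  -- the Sperner bound on the small half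
  set αH := {r : Fin (2*m) // C r i = ε} with hαH
  set J := {j : Fin (n+1) // j ≠ i} with hJ
  have hcardJ : Fintype.card J = n := by
    have h1 : Fintype.card {j : Fin (n+1) // ¬ j = i}
        = Fintype.card (Fin (n+1)) - Fintype.card {j : Fin (n+1) // j = i} :=
      Fintype.card_subtype_compl _
    rw [Fintype.card_subtype_eq, Fintype.card_fin] at h1
    exact h1.trans (by omega)
  set T : J → Finset αH := fun j => univ.filter (fun r => C r.1 j.1 = 1) with hT
  have hmemT : ∀ (j : J) (r : αH), r ∈ T j ↔ C r.1 j.1 = 1 := by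
    intro j r; rw [hT]; simp
  have hmemTc : ∀ (j : J) (r : αH), r ∈ (T j)ᶜ ↔ C r.1 j.1 = 0 := by
    intro j r
    rw [Finset.mem_compl, hmemT]
    constructor
    · exact fun h => fin2_ne_one h
    · intro h hcon; rw [h] at hcon; exact absurd hcon (by decide)
  -- existence of a second index
  have hexl : ∀ j : J, ∃ l : J, l ≠ j := by
    intro j
    have h1 : 1 < Fintype.card J := by omega
    exact Fintype.exists_ne_of_one_lt_card h1 j
  have hTne : ∀ j : J, (T j).Nonempty := by
    intro j
    obtain ⟨l, hl⟩ := hexl j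
    obtain ⟨r, hr1, _⟩ := half_pat hC i ε j l (Ne.symm hl) 1 0
    exact ⟨r, (hmemT j r).2 hr1⟩
  have hTcne : ∀ j : J, ((T j)ᶜ).Nonempty := by
    intro j
    obtain ⟨l, hl⟩ := hexl j
    obtain ⟨r, hr1, _⟩ := half_pat hC i ε j l (Ne.symm hl) 0 0
    exact ⟨r, (hmemTc j r).2 hr1⟩
  -- the four non-inclusions
  have hns1 : ∀ j l : J, j ≠ l → ¬ T j ⊆ T l := by
    intro j l hjl hsub
    obtain ⟨r, hr1, hr2⟩ := half_pat hC i ε j l hjl 1 0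
    have := hsub ((hmemT j r).2 hr1)
    rw [hmemT] at this
    rw [this] at hr2
    exact absurd hr2 (by decide)
  have hns2 : ∀ j l : J, j ≠ l → ¬ T j ⊆ (T l)ᶜ := by
    intro j l hjl hsub
    obtain ⟨r, hr1, hr2⟩ := half_pat hC i ε j l hjl 1 1
    have := hsub ((hmemT j r).2 hr1)
    rw [hmemTc] at this
    rw [this] at hr2
    exact absurd hr2 (by decide)
  have hns3 : ∀ j l : J, j ≠ l → ¬ (T j)ᶜ ⊆ T l := by
    intro j l hjl hsub
    obtain ⟨r, hr1, hr2⟩ := half_pat hC i ε j l hjl 0 0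
    have := hsub ((hmemTc j r).2 hr1)
    rw [hmemT] at this
    rw [this] at hr2
    exact absurd hr2 (by decide)
  have hns4 : ∀ j l : J, j ≠ l → ¬ (T j)ᶜ ⊆ (T l)ᶜ := by
    intro j l hjl hsub
    obtain ⟨r, hr1, hr2⟩ := half_pat hC i ε j l hjl 0 1
    have := hsub ((hmemTc j r).2 hr1)
    rw [hmemTc] at this
    rw [this] at hr2
    exact absurd hr2 (by decide)
  -- diagonal non-inclusions
  have hd1 : ∀ j : J, ¬ T j ⊆ (T j)ᶜ := by
    intro j hsub
    obtain ⟨r, hr⟩ := hTne j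
    have h1 := (hmemT j r).1 hr
    have h2 := (hmemTc j r).1 (hsub hr)
    rw [h1] at h2
    exact absurd h2 (by decide)
  have hd2 : ∀ j : J, ¬ (T j)ᶜ ⊆ T j := by
    intro j hsub
    obtain ⟨r, hr⟩ := hTcne j
    have h1 := (hmemTc j r).1 hr
    have h2 := (hmemT j r).1 (hsub hr)
    rw [h1] at h2
    exact absurd h2 (by decide)
  -- build the antichain
  set 𝒜 : Finset (Finset αH) :=
    (univ.image T) ∪ (univ.image (fun j => (T j)ᶜ)) with h𝒜
  have hTinj : Function.Injective T := by
    intro j l h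
    by_contra hne
    exact hns1 j l hne h.le
  have hTcinj : Function.Injective (fun j => (T j)ᶜ) := by
    intro j l h
    by_contra hne
    have h' : (T j)ᶜ = (T l)ᶜ := h
    exact hns4 j l hne h'.le
  have hdisj𝒜 : Disjoint (univ.image T) (univ.image (fun j : J => (T j)ᶜ)) := by
    rw [Finset.disjoint_left]
    intro X hX hX'
    obtain ⟨j, _, rfl⟩ := Finset.mem_image.1 hX
    obtain ⟨l, _, hl⟩ := Finset.mem_image.1 hX'
    have h' : (T l)ᶜ = T j := hl
    by_cases hjl : j = l
    · subst hjl
      exact hd2 j h'.le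
    · exact hns3 l j (fun hc => hjl hc.symm) h'.le
  have hcard𝒜 : 𝒜.card = 2*n := by
    rw [h𝒜, Finset.card_union_of_disjoint hdisj𝒜,
      Finset.card_image_of_injective _ hTinj, Finset.card_image_of_injective _ hTcinj,
      Finset.card_univ, hcardJ]
    omega
  have hanti : IsAntichain (· ⊆ ·) (𝒜 : Set (Finset αH)) := by
    intro X hX Y hY hXY hsub
    rw [Finset.mem_coe, h𝒜, Finset.mem_union] at hX hY
    rcases hX with hX | hX <;> rcases hY with hY | hY
    · obtain ⟨j, _, rfl⟩ := Finset.mem_image.1 hX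
      obtain ⟨l, _, rfl⟩ := Finset.mem_image.1 hY
      by_cases hjl : j = l
      · exact hXY (by rw [hjl])
      · exact hns1 j l hjl hsub
    · obtain ⟨j, _, rfl⟩ := Finset.mem_image.1 hX
      obtain ⟨l, _, rfl⟩ := Finset.mem_image.1 hY
      by_cases hjl : j = l
      · subst hjl; exact hd1 j hsub
      · exact hns2 j l hjl hsub
    · obtain ⟨j, _, rfl⟩ := Finset.mem_image.1 hX
      obtain ⟨l, _, rfl⟩ := Finset.mem_image.1 hY
      by_cases hjl : j = l
      · subst hjl; exact hd2 j hsub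
      · exact hns3 j l hjl hsub
    · obtain ⟨j, _, rfl⟩ := Finset.mem_image.1 hX
      obtain ⟨l, _, rfl⟩ := Finset.mem_image.1 hY
      by_cases hjl : j = l
      · exact hXY (by rw [hjl])
      · exact hns4 j l hjl hsub
  have hSperner : 2*n ≤ (Fintype.card αH).choose (Fintype.card αH / 2) := by
    rw [← hcard𝒜]
    exact IsAntichain.sperner hanti
  have hmono : (Fintype.card αH).choose (Fintype.card αH / 2)
      ≤ (m-1).choose ((m-1)/2) := central_mono hMle
  -- arithmetic contradiction
  have hf1 : m - 1 ≤ (m-1).choose (k-1) := le_choose_of (by omega) (by omega)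
  rcases (by omega : m = 2*k ∨ m = 2*k+1) with hpar | hpar
  · -- even case
    have hSp : (m-1)/2 = k - 1 := by omega
    rw [hSp] at hmono
    omega
  · -- odd case
    have hSp : (m-1)/2 = k := by omega
    rw [hSp] at hmono
    set f := (m-1).choose (k-1) with hf
    set g := (m-1).choose k with hg
    have hf2k : 2*k ≤ f := by
      have h2k : m - 1 = 2*k := by omega
      omega
    -- identity g * k = f * (k+1)
    obtain ⟨k', hk'⟩ : ∃ k', k = k' + 1 := ⟨k - 1, by omega⟩
    have hId : g * k = f * (k+1) := by
      have h := Nat.choose_succ_right_eq (m-1) k'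
      rw [hg, hf, hk']
      have h1 : k' + 1 - 1 = k' := rfl
      rw [h1, show k'+1+1 = m-1-k' by omega]
      exact h
    have hineq : 2*f + 4 ≤ g + 2*k := by omega
    exact odd_arith hk2 hId hf2k hineq




/-- Part 2 : the distance between two distinct columns. -/
lemma part2 {m n : ℕ} (hm : 5 ≤ m)
    (hn1 : (m-1).choose (m/2 - 1) + m < n + 3 * (m/2))
    (hn2b : n ≤ (m-1).choose (m/2 - 1))
    {C : Fin (2*m) → Fin (n+1) → Fin 2}
    (hC : IsCoveringArray (2*m) (n+1) 2 3 C)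
    (hn2 : 2 ≤ n)
    (hW : ∀ i : Fin (n+1), (univ.filter fun r => C r i = 1).card = m)
    (i j : Fin (n+1)) (hij : i ≠ j) :
    (univ.filter fun r : Fin (2*m) => C r i ≠ C r j).card = 2*(m/2) ∨
    (univ.filter fun r : Fin (2*m) => C r i ≠ C r j).card = 2*((m+1)/2) := by
  classical
  set k := m / 2 with hkdef
  have hk2 : 2 ≤ k := by omega
  have hkm : 2*k ≤ m ∧ m ≤ 2*k + 1 := by omega
  set αH := {r : Fin (2*m) // C r i = 1} with hαH
  have hcardH : Fintype.card αH = m := by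
    have h1 : Fintype.card {r : Fin (2*m) // C r i = 1}
        = (univ.filter fun r : Fin (2*m) => C r i = 1).card := Fintype.card_subtype _
    exact h1.trans (hW i)
  set J := {j' : Fin (n+1) // j' ≠ i} with hJ
  have hcardJ : Fintype.card J = n := by
    have h1 : Fintype.card {j' : Fin (n+1) // ¬ j' = i}
        = Fintype.card (Fin (n+1)) - Fintype.card {j' : Fin (n+1) // j' = i} :=
      Fintype.card_subtype_compl _
    rw [Fintype.card_subtype_eq, Fintype.card_fin] at h1
    exact h1.trans (by omega)
  set T : J → Finset αH := fun l => univ.filter (fun r => C r.1 l.1 = 1) with hT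
  have hmemT : ∀ (l : J) (r : αH), r ∈ T l ↔ C r.1 l.1 = 1 := by
    intro l r; rw [hT]; simp
  have hmemTc : ∀ (l : J) (r : αH), r ∈ (T l)ᶜ ↔ C r.1 l.1 = 0 := by
    intro l r
    rw [Finset.mem_compl, hmemT]
    constructor
    · exact fun h => fin2_ne_one h
    · intro h hcon; rw [h] at hcon; exact absurd hcon (by decide)
  have hexl : ∀ l : J, ∃ l' : J, l' ≠ l := by
    intro l
    have h1 : 1 < Fintype.card J := by omega
    exact Fintype.exists_ne_of_one_lt_card h1 l
  have hTne : ∀ l : J, (T l).Nonempty := by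
    intro l
    obtain ⟨l', hl⟩ := hexl l
    obtain ⟨r, hr1, _⟩ := half_pat hC i 1 l l' (Ne.symm hl) 1 0
    exact ⟨r, (hmemT l r).2 hr1⟩
  have hTcne : ∀ l : J, ((T l)ᶜ).Nonempty := by
    intro l
    obtain ⟨l', hl⟩ := hexl l
    obtain ⟨r, hr1, _⟩ := half_pat hC i 1 l l' (Ne.symm hl) 0 0
    exact ⟨r, (hmemTc l r).2 hr1⟩
  have hns1 : ∀ l l' : J, l ≠ l' → ¬ T l ⊆ T l' := by
    intro l l' hll hsub
    obtain ⟨r, hr1, hr2⟩ := half_pat hC i 1 l l' hll 1 0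
    have := hsub ((hmemT l r).2 hr1)
    rw [hmemT] at this
    rw [this] at hr2
    exact absurd hr2 (by decide)
  have hns2 : ∀ l l' : J, l ≠ l' → ¬ T l ⊆ (T l')ᶜ := by
    intro l l' hll hsub
    obtain ⟨r, hr1, hr2⟩ := half_pat hC i 1 l l' hll 1 1
    have := hsub ((hmemT l r).2 hr1)
    rw [hmemTc] at this
    rw [this] at hr2
    exact absurd hr2 (by decide)
  have hns3 : ∀ l l' : J, l ≠ l' → ¬ (T l)ᶜ ⊆ T l' := by
    intro l l' hll hsub
    obtain ⟨r, hr1, hr2⟩ := half_pat hC i 1 l l' hll 0 0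
    have := hsub ((hmemTc l r).2 hr1)
    rw [hmemT] at this
    rw [this] at hr2
    exact absurd hr2 (by decide)
  have hns4 : ∀ l l' : J, l ≠ l' → ¬ (T l)ᶜ ⊆ (T l')ᶜ := by
    intro l l' hll hsub
    obtain ⟨r, hr1, hr2⟩ := half_pat hC i 1 l l' hll 0 1
    have := hsub ((hmemTc l r).2 hr1)
    rw [hmemTc] at this
    rw [this] at hr2
    exact absurd hr2 (by decide)
  -- representatives of size ≤ k
  set R : J → Finset αH := fun l => if (T l).card ≤ k then T l else (T l)ᶜ with hR
  have hRcases : ∀ l : J, R l = T l ∨ R l = (T l)ᶜ := by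
    intro l
    rw [hR]
    by_cases h : (T l).card ≤ k
    · left; simp [h]
    · right; simp [h]
  set ℛ : Finset (Finset αH) := univ.image R with hℛ
  have hsub_of : ∀ X Y : Finset αH, X ∩ Y = ∅ → X ⊆ Yᶜ := by
    intro X Y h x hx
    rw [Finset.mem_compl]
    intro hy
    have : x ∈ X ∩ Y := Finset.mem_inter.2 ⟨hx, hy⟩
    rw [h] at this
    exact absurd this (Finset.notMem_empty x)
  -- no inclusion between distinct representatives
  have hnoinc : ∀ l l' : J, l ≠ l' → ¬ R l ⊆ R l' := by
    intro l l' hll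
    rcases hRcases l with h1 | h1 <;> rcases hRcases l' with h2 | h2 <;> rw [h1, h2]
    · exact hns1 l l' hll
    · exact hns2 l l' hll
    · exact hns3 l l' hll
    · exact hns4 l l' hll
  have hRinj : Function.Injective R := by
    intro l l' h
    by_contra hne
    exact hnoinc l l' hne h.le
  have hcardℛ : ℛ.card = n := by
    rw [hℛ, Finset.card_image_of_injective _ hRinj, Finset.card_univ, hcardJ]
  have hanti : ∀ B ∈ ℛ, ∀ B' ∈ ℛ, B ⊆ B' → B = B' := by
    intro B hB B' hB' hsub
    rw [hℛ] at hB hB'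
    obtain ⟨l, _, rfl⟩ := Finset.mem_image.1 hB
    obtain ⟨l', _, rfl⟩ := Finset.mem_image.1 hB'
    by_cases hll : l = l'
    · rw [hll]
    · exact absurd hsub (hnoinc l l' hll)
  have hint : ∀ B ∈ ℛ, ∀ B' ∈ ℛ, (B ∩ B').Nonempty := by
    intro B hB B' hB'
    rw [hℛ] at hB hB'
    obtain ⟨l, _, rfl⟩ := Finset.mem_image.1 hB
    obtain ⟨l', _, rfl⟩ := Finset.mem_image.1 hB'
    by_cases hll : l = l'
    · subst hll
      rw [Finset.inter_self]
      rcases hRcases l with h1 | h1 <;> rw [h1]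
      · exact hTne l
      · exact hTcne l
    · by_contra hcon
      rw [Finset.not_nonempty_iff_eq_empty] at hcon
      have hsub := hsub_of _ _ hcon
      rcases hRcases l with h1 | h1 <;> rcases hRcases l' with h2 | h2 <;>
        rw [h1, h2] at hsub
      · exact hns2 l l' hll hsub
      · rw [compl_compl] at hsub
        exact hns1 l l' hll hsub
      · exact hns4 l l' hll hsub
      · rw [compl_compl] at hsub
        exact hns3 l l' hll hsub
  have hsz : ∀ B ∈ ℛ, B.card ≤ k := by
    intro B hB
    rw [hℛ] at hB
    obtain ⟨l, _, rfl⟩ := Finset.mem_image.1 hB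
    rw [hR]
    by_cases h : (T l).card ≤ k
    · simpa [h] using h
    · simp only [h, if_false]
      rw [Finset.card_compl, hcardH]
      omega
  -- the key dichotomy for the overlap a
  set jJ : J := ⟨j, Ne.symm hij⟩ with hjJ
  set a := (T jJ).card with ha
  have ham : a ≤ m := by
    rw [ha]
    calc (T jJ).card ≤ Fintype.card αH := Finset.card_le_univ _
      _ = m := hcardH
  have hdichot : a = k ∨ a = m - k := by
    by_contra hcon
    push_neg at hcon
    obtain ⟨hc1, hc2⟩ := hcon
    have hbad : ∃ A ∈ ℛ, A.card < k := by
      refine ⟨R jJ, Finset.mem_image_of_mem R (Finset.mem_univ jJ), ?_⟩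
      rw [hR]
      by_cases h : (T jJ).card ≤ k
      · simp only [h, if_true]
        omega
      · simp only [h, if_false]
        rw [Finset.card_compl, hcardH]
        omega
    have hstab := stability_lemma (ℛ := ℛ) (k := k) (by omega) (by omega) hanti hint hsz hbad
    rw [hcardH, hcardℛ] at hstab
    omega
  -- now compute the distance
  have hNa : (univ.filter fun r : Fin (2*m) => C r i = 1 ∧ C r j = 1).card = a := by
    rw [ha, hT]
    apply Finset.card_bij (fun (r : Fin (2*m)) hr => (⟨r, (Finset.mem_filter.1 hr).2.1⟩ : αH))
    · intro r hr
      simp only [Finset.mem_filter, Finset.mem_univ, true_and]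
      exact (Finset.mem_filter.1 hr).2.2
    · intro r hr r' hr' hrr
      exact congrArg Subtype.val hrr
    · intro r hr
      refine ⟨r.1, Finset.mem_filter.2 ⟨Finset.mem_univ _, r.2, ?_⟩, rfl⟩
      have := (Finset.mem_filter.1 hr).2
      exact this
  have hsplit1 : (univ.filter fun r : Fin (2*m) => C r i = 1 ∧ C r j = 1).card
      + (univ.filter fun r : Fin (2*m) => C r i = 1 ∧ C r j = 0).card = m := by
    have h0 := Finset.card_filter_add_card_filter_not
      (s := univ.filter fun r : Fin (2*m) => C r i = 1) (p := fun r => C r j = 1)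
    rw [Finset.filter_filter, Finset.filter_filter] at h0
    rw [hW i] at h0
    have he1 : (univ.filter fun r : Fin (2*m) => C r i = 1 ∧ C r j = 1)
        = univ.filter fun r : Fin (2*m) => C r i = 1 ∧ C r j = 1 := rfl
    have he2 : (univ.filter fun r : Fin (2*m) => C r i = 1 ∧ ¬ C r j = 1)
        = univ.filter fun r : Fin (2*m) => C r i = 1 ∧ C r j = 0 := by
      apply Finset.filter_congr
      intro r _
      constructor
      · rintro ⟨h1, h2⟩; exact ⟨h1, fin2_ne_one h2⟩
      · rintro ⟨h1, h2⟩; refine ⟨h1, ?_⟩; rw [h2]; decide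
    rw [he2] at h0
    exact h0
  have hsplit2 : (univ.filter fun r : Fin (2*m) => C r i = 1 ∧ C r j = 1).card
      + (univ.filter fun r : Fin (2*m) => C r i = 0 ∧ C r j = 1).card = m := by
    have h0 := Finset.card_filter_add_card_filter_not
      (s := univ.filter fun r : Fin (2*m) => C r j = 1) (p := fun r => C r i = 1)
    rw [Finset.filter_filter, Finset.filter_filter] at h0
    rw [hW j] at h0
    have he1 : (univ.filter fun r : Fin (2*m) => C r j = 1 ∧ C r i = 1)
        = univ.filter fun r : Fin (2*m) => C r i = 1 ∧ C r j = 1 := by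
      apply Finset.filter_congr
      intro r _
      exact ⟨fun h => ⟨h.2, h.1⟩, fun h => ⟨h.2, h.1⟩⟩
    have he2 : (univ.filter fun r : Fin (2*m) => C r j = 1 ∧ ¬ C r i = 1)
        = univ.filter fun r : Fin (2*m) => C r i = 0 ∧ C r j = 1 := by
      apply Finset.filter_congr
      intro r _
      constructor
      · rintro ⟨h1, h2⟩; exact ⟨fin2_ne_one h2, h1⟩
      · rintro ⟨h1, h2⟩; refine ⟨h2, ?_⟩; rw [h1]; decide
    rw [he1, he2] at h0
    exact h0
  have hdist : (univ.filter fun r : Fin (2*m) => C r i ≠ C r j).card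
      = (univ.filter fun r : Fin (2*m) => C r i = 1 ∧ C r j = 0).card
      + (univ.filter fun r : Fin (2*m) => C r i = 0 ∧ C r j = 1).card := by
    have hu : (univ.filter fun r : Fin (2*m) => C r i ≠ C r j)
        = (univ.filter fun r : Fin (2*m) => C r i = 1 ∧ C r j = 0)
          ∪ (univ.filter fun r : Fin (2*m) => C r i = 0 ∧ C r j = 1) := by
      ext r
      simp only [Finset.mem_filter, Finset.mem_univ, true_and, Finset.mem_union]
      constructor
      · intro h
        rcases fin2_cases (C r i) with h1 | h1 <;> rcases fin2_cases (C r j) with h2 | h2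
        · exact absurd (h1.trans h2.symm) h
        · exact Or.inr ⟨h1, h2⟩
        · exact Or.inl ⟨h1, h2⟩
        · exact absurd (h1.trans h2.symm) h
      · rintro (⟨h1, h2⟩ | ⟨h1, h2⟩) <;> rw [h1, h2] <;> decide
    rw [hu]
    apply Finset.card_union_of_disjoint
    rw [Finset.disjoint_left]
    intro r hr hr'
    rw [Finset.mem_filter] at hr hr'
    rw [hr.2.1] at hr'
    exact absurd hr'.2.1 (by decide)
  rcases hdichot with hA | hA
  · right
    rw [hdist]
    omega
  · left
    rw [hdist]
    omega


/-- if `m ≥ 5` and `binom(m-1,⌊m/2⌋-1) + m - 3⌊m/2⌋ < n ≤ binom(m-1,⌊m/2⌋-1)`,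
then every column of a `2m × (n+1)` binary 3-covering array has weight `m`, and any two
distinct columns are at Hamming distance `2⌊m/2⌋` or `2⌈m/2⌉`. -/
theorem weight_and_distance (m n : ℕ) (hm : 5 ≤ m)
    (hn1 : (m-1).choose (m/2 - 1) + m < n + 3 * (m/2))
    (hn2 : n ≤ (m-1).choose (m/2 - 1))
    (C : Fin (2*m) → Fin (n+1) → Fin 2)
    (hC : IsCoveringArray (2*m) (n+1) 2 3 C) :
    (∀ i : Fin (n+1), colWt C i = m) ∧
    (∀ i j : Fin (n+1), i ≠ j →
      colDist C i j = 2 * (m/2) ∨ colDist C i j = 2 * ((m+1)/2)) := by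
  classical
  have hf1 : m - 1 ≤ (m-1).choose (m/2 - 1) := le_choose_of (by omega) (by omega)
  have hnge2 : 2 ≤ n := by omega
  have hW : ∀ i : Fin (n+1), (univ.filter fun r => C r i = 1).card = m :=
    fun i => part1 hm hn1 hC hnge2 i
  constructor
  · intro i
    have hconv : colWt C i = (univ.filter fun r => C r i = 1).card := by
      unfold colWt
      congr 1
      apply Finset.filter_congr
      intro r _
      constructor
      · intro h
        apply fin2_ne_zero
        intro h0
        rw [h0] at h
        exact h rfl
      · intro h
        rw [h]
        decide
    rw [hconv]
    exact hW i
  · intro i j hij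
    have h := part2 hm hn1 hn2 hC hnge2 hW i j hij
    exact h
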